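/- Let m ≥ 2 be even, let M be a set of m items, and let v₁, v₂ : 2^M → ℝ be arbitrary set functions. Let π₁ and π₂ be independent uniformly random permutations of M. Then with probability at least 1 - 1/(m/2 + 1), there exists an envy-free allocation for the renamed valuations v₁^{π₁} and v₂^{π₂}; that is, there exists S ⊆ M with v₁(π₁⁻¹(S)) ≥ v₁(π₁⁻¹(M \ S)) and v₂(π₂⁻¹(M \ S)) ≥ v₂(π₂⁻¹(S)). -/

import Mathlib

open Equiv Finset Equiv.Perm
open scoped Nat

set_option linter.unusedSectionVars false
set_option linter.unusedVariables false
set_option maxHeartbeats 1000000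


section Aux
variable {M : Type*} [Fintype M] [DecidableEq M]

lemma image_compl_perm (σ : Equiv.Perm M) (T : Finset M) :
    Tᶜ.image ⇑σ = (T.image ⇑σ)ᶜ := by
  ext x
  simp only [Finset.mem_image, Finset.mem_compl]
  constructor
  · rintro ⟨a, ha, rfl⟩ ⟨b, hb, hba⟩
    exact ha (by rwa [σ.injective hba] at hb)
  · intro h
    exact ⟨σ.symm x, fun hmem => h ⟨σ.symm x, hmem, σ.apply_symm_apply x⟩,
      σ.apply_symm_apply x⟩

/-- The subgroup of permutations preserving the family `{U | b U}`. -/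
def famStab (b : Finset M → Prop) : Subgroup (Equiv.Perm M) where
  carrier := {g | ∀ U : Finset M, b (U.image ⇑g) ↔ b U}
  one_mem' := by intro U; simp
  mul_mem' := by
    intro g h hg hh U
    have h1 : U.image ⇑(g * h) = (U.image ⇑h).image ⇑g := by
      rw [Finset.image_image]; rfl
    rw [h1]
    exact (hg _).trans (hh U)
  inv_mem' := by
    intro g hg U
    have h1 := hg (U.image ⇑g⁻¹)
    have h2 : (U.image ⇑g⁻¹).image ⇑g = U := by
      rw [Finset.image_image]
      have : (⇑g ∘ ⇑g⁻¹) = id := by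
        funext x; simp
      rw [this, Finset.image_id]
    rw [h2] at h1
    exact h1.symm

lemma mem_famStab {b : Finset M → Prop} {g : Equiv.Perm M} :
    g ∈ famStab b ↔ ∀ U : Finset M, b (U.image ⇑g) ↔ b U := Iff.rfl

end Aux



section ThreeCycle
variable {M : Type*} [Fintype M] [DecidableEq M]

lemma comm_swap_mem (K : Subgroup (Equiv.Perm M)) [hN : K.Normal] {x : Equiv.Perm M}
    (hx : x ∈ K) (a b : M) : Equiv.swap (x a) (x b) * Equiv.swap a b ∈ K := by
  have h1 : Equiv.swap (x a) (x b) * Equiv.swap a b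
      = x * (Equiv.swap a b * x⁻¹ * (Equiv.swap a b)⁻¹) := by
    rw [swap_apply_apply, Equiv.swap_inv]
    group
  rw [h1]
  exact K.mul_mem hx (hN.conj_mem x⁻¹ (K.inv_mem hx) (Equiv.swap a b))

lemma exists_not_mem_of_card_lt {s : Finset M} (h : s.card < Fintype.card M) :
    ∃ c, c ∉ s := by
  have : sᶜ.Nonempty := by
    rw [← Finset.card_pos, Finset.card_compl]
    omega
  obtain ⟨c, hc⟩ := this
  exact ⟨c, Finset.mem_compl.mp hc⟩

lemma normal_contains_threeCycle (h5 : 5 ≤ Fintype.card M)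
    (K : Subgroup (Equiv.Perm M)) [hN : K.Normal] (hK : K ≠ ⊥) :
    ∃ t ∈ K, Equiv.Perm.IsThreeCycle t := by
  obtain ⟨g, hgK, hg1⟩ : ∃ g ∈ K, g ≠ 1 := by
    by_contra h
    push_neg at h
    exact hK (Subgroup.eq_bot_iff_forall K |>.mpr h)
  obtain ⟨a, ha⟩ : ∃ a, g a ≠ a := by
    by_contra h
    push_neg at h
    exact hg1 (Equiv.ext h)
  set b := g a with hb
  have hba : b ≠ a := ha
  by_cases hgb : g b = a
  · -- `g` swaps `a` and `b`; find a third point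
    obtain ⟨c, hc⟩ : ∃ c, c ∉ ({a, b} : Finset M) := by
      apply exists_not_mem_of_card_lt
      calc ({a, b} : Finset M).card ≤ 2 := Finset.card_le_two
        _ < 5 := by omega
        _ ≤ Fintype.card M := h5
    simp only [Finset.mem_insert, Finset.mem_singleton, not_or] at hc
    obtain ⟨hca, hcb⟩ := hc
    have hmem := comm_swap_mem K hgK b c
    rw [hgb] at hmem
    by_cases hgc : g c = c
    · rw [hgc] at hmem
      refine ⟨_, hmem, ?_⟩
      rw [show Equiv.swap a c = Equiv.swap c a from Equiv.swap_comm a c,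
        show Equiv.swap b c = Equiv.swap c b from Equiv.swap_comm b c]
      exact Equiv.Perm.isThreeCycle_swap_mul_swap_same hca hcb hba.symm
    · set d := g c with hd
      have hdc : d ≠ c := hgc
      have hda : d ≠ a := fun h => hcb (g.injective (h.trans hgb.symm))
      have hdb : d ≠ b := fun h => hca (g.injective (h.trans hb))
      -- hmem : swap a d * swap b c ∈ K
      obtain ⟨e, he⟩ : ∃ e, e ∉ ({a, b, c, d} : Finset M) := by
        apply exists_not_mem_of_card_lt
        calc ({a, b, c, d} : Finset M).card ≤ 4 := by
              apply le_trans (Finset.card_insert_le _ _)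
              apply Nat.succ_le_succ
              apply le_trans (Finset.card_insert_le _ _)
              apply Nat.succ_le_succ
              apply le_trans (Finset.card_insert_le _ _)
              simp
          _ < 5 := by omega
          _ ≤ Fintype.card M := h5
      simp only [Finset.mem_insert, Finset.mem_singleton, not_or] at he
      obtain ⟨hea, heb, hec, hed⟩ := he
      set h₁ := Equiv.swap a d * Equiv.swap b c with hh₁
      have h₁c : h₁ c = b := by
        simp only [hh₁, Equiv.Perm.mul_apply, Equiv.swap_apply_right]
        exact Equiv.swap_apply_of_ne_of_ne hba hdb.symm
      have h₁e : h₁ e = e := by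
        simp only [hh₁, Equiv.Perm.mul_apply]
        rw [Equiv.swap_apply_of_ne_of_ne heb hec,
          Equiv.swap_apply_of_ne_of_ne hea hed]
      have hmem2 := comm_swap_mem K hmem c e
      rw [h₁c, h₁e] at hmem2
      refine ⟨_, hmem2, ?_⟩
      rw [show Equiv.swap b e = Equiv.swap e b from Equiv.swap_comm b e,
        show Equiv.swap c e = Equiv.swap e c from Equiv.swap_comm c e]
      exact Equiv.Perm.isThreeCycle_swap_mul_swap_same heb hec (fun h => hcb h.symm)
  · -- g b ∉ {a, b} : direct three cycle
    have hgbb : g b ≠ b := fun h => hba (g.injective (hb.symm.trans h.symm) ▸ rfl)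
    have hmem := comm_swap_mem K hgK a b
    rw [← hb] at hmem
    refine ⟨_, hmem, ?_⟩
    rw [show Equiv.swap a b = Equiv.swap b a from Equiv.swap_comm a b]
    exact Equiv.Perm.isThreeCycle_swap_mul_swap_same (Ne.symm hgbb) hba hgb

end ThreeCycle



section Alt
variable {M : Type*} [Fintype M] [DecidableEq M]



lemma alternating_le_normal (h5 : 5 ≤ Fintype.card M)
    (K : Subgroup (Equiv.Perm M)) [hN : K.Normal] (hK : K ≠ ⊥) :
    alternatingGroup M ≤ K := by
  obtain ⟨t, htK, h3⟩ := normal_contains_threeCycle h5 K hK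
  have htop : K.subgroupOf (alternatingGroup M) = ⊤ := by
    rw [eq_top_iff, ← h3.alternating_normalClosure (by rwa [Nat.card_eq_fintype_card])]
    apply Subgroup.normalClosure_le_normal
    rw [Set.singleton_subset_iff, SetLike.mem_coe, Subgroup.mem_subgroupOf]
    exact htK
  exact Subgroup.subgroupOf_eq_top.mp htop

lemma exists_even_compl {k : ℕ} (hk : 2 ≤ k) (hcard : Fintype.card M = 2 * k) :
    ∃ g ∈ alternatingGroup M, ∃ U : Finset M, U.image ⇑g = Uᶜ := by
  obtain ⟨U, -, hU⟩ := Finset.exists_subset_card_eq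
    (show k ≤ (Finset.univ : Finset M).card by rw [Finset.card_univ, hcard]; omega)
  have hUc : Uᶜ.card = k := by rw [Finset.card_compl, hU, hcard]; omega
  have hcards : Fintype.card {x // x ∈ U} = Fintype.card {x // x ∈ Uᶜ} := by
    rw [Fintype.card_coe U, Fintype.card_coe Uᶜ, hU, hUc]
  obtain ⟨e⟩ := Fintype.truncEquivOfCardEq hcards |>.nonempty
  set g₀ : Equiv.Perm M := e.extendSubtype with hg₀
  have hmap : ∀ x ∈ U, g₀ x ∈ Uᶜ := fun x hx => e.extendSubtype_mem x hx
  have himg : U.image ⇑g₀ = Uᶜ := by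
    apply Finset.eq_of_subset_of_card_le
    · intro x hx
      obtain ⟨a, haU, rfl⟩ := Finset.mem_image.mp hx
      exact hmap a haU
    · rw [Finset.card_image_of_injective _ g₀.injective, hU, hUc]
  rcases Int.units_eq_one_or (Equiv.Perm.sign g₀) with hsgn | hsgn
  · exact ⟨g₀, Equiv.Perm.mem_alternatingGroup.mpr hsgn, U, himg⟩
  · obtain ⟨y₁, hy₁, y₂, hy₂, hyy⟩ := Finset.one_lt_card.mp (show 1 < Uᶜ.card by omega)
    refine ⟨Equiv.swap y₁ y₂ * g₀, ?_, U, ?_⟩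
    · rw [Equiv.Perm.mem_alternatingGroup, Equiv.Perm.sign_mul, hsgn,
        Equiv.Perm.sign_swap hyy]
      exact Int.units_mul_self _
    · have h1 : U.image ⇑(Equiv.swap y₁ y₂ * g₀) = (U.image ⇑g₀).image ⇑(Equiv.swap y₁ y₂) := by
        rw [Finset.image_image]; rfl
      rw [h1, himg]
      apply Finset.eq_of_subset_of_card_le
      · intro x hx
        obtain ⟨a, haU, rfl⟩ := Finset.mem_image.mp hx
        rcases eq_or_ne a y₁ with rfl | h1'
        · rwa [Equiv.swap_apply_left]
        rcases eq_or_ne a y₂ with rfl | h2'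
        · rwa [Equiv.swap_apply_right]
        · rwa [Equiv.swap_apply_of_ne_of_ne h1' h2']
      · rw [Finset.card_image_of_injective _ (Equiv.swap y₁ y₂).injective]

end Alt



section Core
variable {M : Type*} [Fintype M] [DecidableEq M]



theorem famStab_index {k : ℕ} (hk : 1 ≤ k) (hcard : Fintype.card M = 2 * k)
    (b : Finset M → Prop) (hb : ∀ U : Finset M, b Uᶜ ↔ ¬ b U) :
    k + 1 ≤ (famStab b).index := by
  classical
  set H := famStab b with hH
  -- key : no element of `H` maps some `U` to `Uᶜ`
  have key : ∀ g ∈ H, ∀ U : Finset M, U.image ⇑g ≠ Uᶜ := by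
    intro g hg U hUg
    have h1 := (mem_famStab.mp hg) U
    rw [hUg, hb] at h1
    exact iff_not_self h1.symm
  by_contra hcon
  push_neg at hcon
  have hHle : H.index ≤ k := by omega
  set K := H.normalCore with hK
  have hKle : K ≤ H := Subgroup.normalCore_le H
  have hKdvd : K.index ∣ Nat.factorial H.index := by
    rw [hK, Subgroup.normalCore_eq_ker, Subgroup.index_ker]
    have h1 : Nat.card (MulAction.toPermHom (Equiv.Perm M) (Equiv.Perm M ⧸ H)).range ∣
        Nat.card (Equiv.Perm (Equiv.Perm M ⧸ H)) := Subgroup.card_subgroup_dvd_card _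
    have h2 : Nat.card (Equiv.Perm (Equiv.Perm M ⧸ H)) = Nat.factorial H.index := by
      letI := Fintype.ofFinite (Equiv.Perm M ⧸ H)
      rw [Nat.card_eq_fintype_card, Fintype.card_perm, Subgroup.index_eq_card,
        Nat.card_eq_fintype_card]
    rwa [h2] at h1
  have hKidx : K.index ≤ k ! :=
    Nat.le_of_dvd (Nat.factorial_pos k)
      (hKdvd.trans (Nat.factorial_dvd_factorial hHle))
  have hKcard : Nat.card K * K.index = (2 * k)! := by
    rw [Subgroup.card_mul_index, Nat.card_eq_fintype_card, Fintype.card_perm, hcard]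
  rcases (show k = 1 ∨ k = 2 ∨ 3 ≤ k by omega) with rfl | hk2
  · -- k = 1 : H = ⊤ contains the swap
    have hidx1 : H.index = 1 := by
      have := Subgroup.index_ne_zero_of_finite (H := H)
      omega
    have hHtop : H = ⊤ := Subgroup.index_eq_one.mp hidx1
    obtain ⟨w, x, hwx, huniv⟩ := Finset.card_eq_two.mp
      (show (Finset.univ : Finset M).card = 2 by rw [Finset.card_univ, hcard])
    have hUc : ({w} : Finset M)ᶜ = {x} := by
      ext v
      have hv : v ∈ (Finset.univ : Finset M) := Finset.mem_univ v
      rw [huniv] at hv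
      simp only [Finset.mem_compl, Finset.mem_singleton, Finset.mem_insert,
        Finset.mem_singleton] at hv ⊢
      rcases hv with rfl | rfl
      · simp [hwx]
      · simp [Ne.symm hwx]
    refine key (Equiv.swap w x) (hHtop ▸ Subgroup.mem_top _) {w} ?_
    rw [Finset.image_singleton, Equiv.swap_apply_left, hUc]
  rcases hk2 with rfl | hk3
  · -- k = 2 : every square is in K ≤ H; use a 4-cycle
    have hsq : ∀ g : Equiv.Perm M, g ^ 2 ∈ K := by
      intro g
      have hdvd2 : Nat.card (Equiv.Perm M ⧸ K) ∣ 2 := by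
        rw [← Subgroup.index_eq_card]
        exact hKdvd.trans (Nat.factorial_dvd_factorial hHle)
      obtain ⟨t, ht⟩ := hdvd2
      have h1 : ((g : Equiv.Perm M ⧸ K)) ^ Nat.card (Equiv.Perm M ⧸ K) = 1 :=
        pow_card_eq_one'
      have h2 : ((g ^ 2 : Equiv.Perm M) : Equiv.Perm M ⧸ K) = 1 := by
        rw [QuotientGroup.mk_pow, ht, pow_mul, h1, one_pow]
      exact (QuotientGroup.eq_one_iff _).mp h2
    obtain ⟨U, -, hU⟩ := Finset.exists_subset_card_eq
      (show 2 ≤ (Finset.univ : Finset M).card by rw [Finset.card_univ, hcard]; omega)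
    have hUc : Uᶜ.card = 2 := by rw [Finset.card_compl, hU, hcard]
    obtain ⟨w, x, hwx, hUwx⟩ := Finset.card_eq_two.mp hU
    obtain ⟨y, z, hyz, hUyz⟩ := Finset.card_eq_two.mp hUc
    have hyU : y ∉ U := Finset.mem_compl.mp (hUyz ▸ Finset.mem_insert_self y {z})
    have hzU : z ∉ U := Finset.mem_compl.mp
      (hUyz ▸ Finset.mem_insert_of_mem (Finset.mem_singleton_self z))
    have hwU : w ∈ U := hUwx ▸ Finset.mem_insert_self w {x}
    have hxU : x ∈ U := hUwx ▸ Finset.mem_insert_of_mem (Finset.mem_singleton_self x)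
    have hwy : w ≠ y := fun h => hyU (h ▸ hwU)
    have hwz : w ≠ z := fun h => hzU (h ▸ hwU)
    have hxy : x ≠ y := fun h => hyU (h ▸ hxU)
    have hxz : x ≠ z := fun h => hzU (h ▸ hxU)
    set g : Equiv.Perm M := Equiv.swap w x * Equiv.swap x y * Equiv.swap y z with hg
    have hgw : g w = x := by
      simp only [hg, Equiv.Perm.mul_apply]
      rw [Equiv.swap_apply_of_ne_of_ne hwy hwz,
        Equiv.swap_apply_of_ne_of_ne hwx hwy, Equiv.swap_apply_left]
    have hgx : g x = y := by
      simp only [hg, Equiv.Perm.mul_apply]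
      rw [Equiv.swap_apply_of_ne_of_ne hxy hxz, Equiv.swap_apply_left,
        Equiv.swap_apply_of_ne_of_ne (Ne.symm hwy) (Ne.symm hxy)]
    have hgy : g y = z := by
      simp only [hg, Equiv.Perm.mul_apply]
      rw [Equiv.swap_apply_left, Equiv.swap_apply_of_ne_of_ne (Ne.symm hxz) (Ne.symm hyz),
        Equiv.swap_apply_of_ne_of_ne (Ne.symm hwz) (Ne.symm hxz)]
    have hg2w : (g ^ 2) w = y := by rw [pow_two, Equiv.Perm.mul_apply, hgw, hgx]
    have hg2x : (g ^ 2) x = z := by rw [pow_two, Equiv.Perm.mul_apply, hgx, hgy]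
    have himg : U.image ⇑(g ^ 2) = Uᶜ := by
      have himg2 : U.image ⇑(g ^ 2) = {y, z} := by
        rw [hUwx, Finset.image_insert, Finset.image_singleton, hg2w, hg2x]
      rw [himg2]
      exact hUyz.symm
    exact key (g ^ 2) (hKle (hsq g)) U himg
  · -- k ≥ 3
    have h5 : 5 ≤ Fintype.card M := by omega
    have hKbot : K ≠ ⊥ := by
      intro hbot
      have h1 : Nat.card K = 1 := by rw [hbot]; simp
      rw [h1, one_mul] at hKcard
      have h2 : k ! < (2 * k)! := (Nat.factorial_lt (by omega)).mpr (by omega)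
      omega
    obtain ⟨g, hgA, U, hU⟩ := exists_even_compl (show 2 ≤ k by omega) hcard
    exact key g (hKle (alternating_le_normal h5 K hKbot hgA)) U hU

end Core





/-- For an even number `m ≥ 2` of items and two agents with arbitrary valuations
`v₁, v₂ : 2^M → ℝ`, after independent uniformly random renamings `π₁, π₂`, an envy-free
allocation exists with probability at least `1 - 1/(m/2 + 1)`.  Probability is expressed by
counting pairs of permutations: the number of pairs `(π₁, π₂)` for which an EF allocation exists
is at least `(1 - 1/(m/2 + 1)) · (m!)²`. -/
theorem ef_exists_whp_general {M : Type*} [Fintype M] [DecidableEq M] (m : ℕ)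
    (hm : 2 ≤ m) (heven : Even m) (hM : Fintype.card M = m) (v₁ v₂ : Finset M → ℝ) :
    ((1 : ℝ) - 1 / ((m : ℝ) / 2 + 1)) * (Nat.factorial m : ℝ) ^ 2 ≤
      Nat.card {p : Equiv.Perm M × Equiv.Perm M //
        ∃ S : Finset M,
          v₁ (S.image (⇑p.1.symm)) ≥ v₁ (Sᶜ.image (⇑p.1.symm)) ∧
          v₂ (Sᶜ.image (⇑p.2.symm)) ≥ v₂ (S.image (⇑p.2.symm))} := by
  classical
  obtain ⟨r, hr⟩ := heven
  set k := r with hkdef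
  have hm2 : m = 2 * k := by omega
  have hk : 1 ≤ k := by omega
  have hcard2 : Fintype.card M = 2 * k := by rw [hM, hm2]
  -- the success predicate for a single permutation
  set Succ : Equiv.Perm M → Prop := fun σ => ∃ T : Finset M,
      v₁ T ≥ v₁ Tᶜ ∧ v₂ ((T.image ⇑σ)ᶜ) ≥ v₂ (T.image ⇑σ) with hSucc
  -- equivalence between pairs and (first coordinate, composite)
  have hPiff : ∀ p : Equiv.Perm M × Equiv.Perm M,
      (∃ S : Finset M,
          v₁ (S.image (⇑p.1.symm)) ≥ v₁ (Sᶜ.image (⇑p.1.symm)) ∧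
          v₂ (Sᶜ.image (⇑p.2.symm)) ≥ v₂ (S.image (⇑p.2.symm)))
        ↔ Succ (p.1.trans p.2.symm) := by
    intro p
    constructor
    · rintro ⟨S, h1, h2⟩
      refine ⟨S.image ⇑p.1.symm, ?_, ?_⟩
      · rwa [image_compl_perm p.1.symm S] at h1
      · have e1 : (S.image ⇑p.1.symm).image ⇑(p.1.trans p.2.symm) = S.image ⇑p.2.symm := by
          rw [Finset.image_image]
          congr 1
          funext x
          simp
        rw [e1, ← image_compl_perm p.2.symm S]
        exact h2
    · rintro ⟨T, h1, h2⟩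
      refine ⟨T.image ⇑p.1, ?_, ?_⟩
      · have e2 : (T.image ⇑p.1).image ⇑p.1.symm = T := by
          rw [Finset.image_image]
          have : (⇑p.1.symm ∘ ⇑p.1) = id := by funext x; simp
          rw [this, Finset.image_id]
        rw [image_compl_perm p.1.symm (T.image ⇑p.1), e2]
        exact h1
      · have e3 : (T.image ⇑p.1).image ⇑p.2.symm = T.image ⇑(p.1.trans p.2.symm) := by
          rw [Finset.image_image]; rfl
        rw [image_compl_perm p.2.symm (T.image ⇑p.1), e3]
        exact h2
  set E : {p : Equiv.Perm M × Equiv.Perm M //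
      ∃ S : Finset M,
        v₁ (S.image (⇑p.1.symm)) ≥ v₁ (Sᶜ.image (⇑p.1.symm)) ∧
        v₂ (Sᶜ.image (⇑p.2.symm)) ≥ v₂ (S.image (⇑p.2.symm))} ≃
      (Equiv.Perm M) × {σ : Equiv.Perm M // Succ σ} :=
    { toFun := fun p => (p.1.1, ⟨p.1.1.trans p.1.2.symm, (hPiff p.1).mp p.2⟩)
      invFun := fun q => ⟨(q.1, (q.2.1).symm.trans q.1), by
        rw [hPiff]
        have hq : ((q.1 : Equiv.Perm M).trans (((q.2.1).symm.trans q.1)).symm) = q.2.1 := by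
          ext x; simp
        rw [hq]
        exact q.2.2⟩
      left_inv := fun p => by
        apply Subtype.ext
        apply Prod.ext
        · rfl
        · show (p.1.1.trans p.1.2.symm).symm.trans p.1.1 = p.1.2
          ext x; simp
      right_inv := fun q => by
        apply Prod.ext
        · rfl
        · apply Subtype.ext
          show q.1.trans ((q.2.1.symm.trans q.1)).symm = q.2.1
          ext x; simp } with hE
  set S := Finset.univ.filter Succ with hSdef
  set F := Finset.univ.filter (fun σ => ¬ Succ σ) with hFdef
  have hcnt : Nat.card {p : Equiv.Perm M × Equiv.Perm M //
      ∃ S : Finset M,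
        v₁ (S.image (⇑p.1.symm)) ≥ v₁ (Sᶜ.image (⇑p.1.symm)) ∧
        v₂ (Sᶜ.image (⇑p.2.symm)) ≥ v₂ (S.image (⇑p.2.symm))} = m ! * S.card := by
    rw [Nat.card_congr E, Nat.card_prod]
    congr 1
    · rw [Nat.card_eq_fintype_card, Fintype.card_perm, hM]
    · rw [Nat.card_eq_fintype_card, Fintype.card_subtype]
  have hSF : S.card + F.card = m ! := by
    rw [hSdef, hFdef, Finset.card_filter_add_card_filter_not,
      Finset.card_univ, Fintype.card_perm, hM]
  have hFle : (k + 1) * F.card ≤ m ! := by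
    rcases F.eq_empty_or_nonempty with hF | ⟨σ₀, hσ₀⟩
    · rw [hF]; simp
    · have hσ₀' : ¬ Succ σ₀ := (Finset.mem_filter.mp hσ₀).2
      have ha_tot : ∀ T : Finset M, v₁ T ≥ v₁ Tᶜ ∨ v₁ Tᶜ ≥ v₁ Tᶜᶜ := by
        intro T
        rw [compl_compl]
        rcases le_total (v₁ Tᶜ) (v₁ T) with h | h
        · left; exact h
        · right; exact h
      have hb_tot : ∀ U : Finset M, v₂ Uᶜ ≥ v₂ U ∨ v₂ Uᶜᶜ ≥ v₂ Uᶜ := by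
        intro U
        rw [compl_compl]
        rcases le_total (v₂ U) (v₂ Uᶜ) with h | h
        · left; exact h
        · right; exact h
      have hiff : ∀ σ : Equiv.Perm M, ¬ Succ σ → ∀ T : Finset M,
          (v₂ ((T.image ⇑σ)ᶜ) ≥ v₂ (T.image ⇑σ) ↔ ¬ (v₁ T ≥ v₁ Tᶜ)) := by
        intro σ hσ T
        constructor
        · intro hbT haT; exact hσ ⟨T, haT, hbT⟩
        · intro hna
          have haTc : v₁ Tᶜ ≥ v₁ Tᶜᶜ := (ha_tot T).resolve_left hna
          have hnb : ¬ (v₂ ((Tᶜ.image ⇑σ)ᶜ) ≥ v₂ (Tᶜ.image ⇑σ)) :=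
            fun hbb => hσ ⟨Tᶜ, haTc, hbb⟩
          rw [image_compl_perm] at hnb
          rcases hb_tot (T.image ⇑σ) with h | h
          · exact h
          · exact absurd h hnb
      have hbex : ∀ U : Finset M, (v₂ Uᶜᶜ ≥ v₂ Uᶜ) ↔ ¬ (v₂ Uᶜ ≥ v₂ U) := by
        intro U
        have hTU : (U.image ⇑σ₀.symm).image ⇑σ₀ = U := by
          rw [Finset.image_image]
          have : (⇑σ₀ ∘ ⇑σ₀.symm) = id := by funext x; simp
          rw [this, Finset.image_id]
        have h1 : (v₂ Uᶜᶜ ≥ v₂ Uᶜ) ↔ ¬ (v₁ ((U.image ⇑σ₀.symm)ᶜ) ≥ v₁ ((U.image ⇑σ₀.symm)ᶜᶜ)) := by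
          have := hiff σ₀ hσ₀' ((U.image ⇑σ₀.symm)ᶜ)
          rwa [image_compl_perm, hTU] at this
        have h2 : (v₂ Uᶜ ≥ v₂ U) ↔ ¬ (v₁ (U.image ⇑σ₀.symm) ≥ v₁ ((U.image ⇑σ₀.symm)ᶜ)) := by
          have := hiff σ₀ hσ₀' (U.image ⇑σ₀.symm)
          rwa [hTU] at this
        rw [h1, h2, not_not, compl_compl]
        constructor
        · intro hnaTc
          rcases ha_tot (U.image ⇑σ₀.symm) with h | h
          · exact h
          · rw [compl_compl] at h; exact absurd h hnaTc
        · intro h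
          intro haTc
          -- h : v₁ T ≥ v₁ Tᶜ ; haTc : v₁ Tᶜ ≥ v₁ T  -- exactness from failure
          rcases hb_tot ((U.image ⇑σ₀.symm).image ⇑σ₀) with hbb | hbb
          · exact hσ₀' ⟨U.image ⇑σ₀.symm, h, hbb⟩
          · rw [← image_compl_perm] at hbb
            refine hσ₀' ⟨(U.image ⇑σ₀.symm)ᶜ, ?_, hbb⟩
            rwa [compl_compl]
      -- map F injectively into the stabilizer subgroup
      set b : Finset M → Prop := fun U => v₂ Uᶜ ≥ v₂ U with hbdef
      have hbex' : ∀ U : Finset M, b Uᶜ ↔ ¬ b U := by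
        intro U; exact hbex U
      have hmapsto : ∀ σ ∈ F, σ₀.symm.trans σ ∈ famStab b := by
        intro σ hσF
        have hσ' : ¬ Succ σ := (Finset.mem_filter.mp hσF).2
        rw [mem_famStab]
        intro U
        have hTU : (U.image ⇑σ₀.symm).image ⇑σ₀ = U := by
          rw [Finset.image_image]
          have : (⇑σ₀ ∘ ⇑σ₀.symm) = id := by funext x; simp
          rw [this, Finset.image_id]
        have h1 : U.image ⇑(σ₀.symm.trans σ) = (U.image ⇑σ₀.symm).image ⇑σ := by
          rw [Finset.image_image]; rfl
        show (v₂ ((U.image ⇑(σ₀.symm.trans σ))ᶜ) ≥ v₂ (U.image ⇑(σ₀.symm.trans σ))) ↔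
          (v₂ Uᶜ ≥ v₂ U)
        rw [h1, hiff σ hσ' (U.image ⇑σ₀.symm), ← hiff σ₀ hσ₀' (U.image ⇑σ₀.symm), hTU]
      have hinj : Set.InjOn (fun σ : Equiv.Perm M => σ₀.symm.trans σ) F := by
        intro x hx y hy h
        have e : ∀ u : Equiv.Perm M, σ₀.trans (σ₀.symm.trans u) = u := by
          intro u; ext v; simp
        have h2 : σ₀.trans (σ₀.symm.trans x) = σ₀.trans (σ₀.symm.trans y) := by
          simp only at h; rw [h]
        rwa [e x, e y] at h2
      have hc1 : F.card ≤ (Finset.univ.filter (· ∈ famStab b)).card :=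
        Finset.card_le_card_of_injOn _
          (fun σ hσ => Finset.mem_filter.mpr ⟨Finset.mem_univ _, hmapsto σ hσ⟩) hinj
      have hc2 : (Finset.univ.filter (· ∈ famStab b)).card = Nat.card (famStab b) := by
        rw [Nat.card_eq_fintype_card, Fintype.card_subtype]
      have hidx := famStab_index hk hcard2 b hbex'
      have hmul := Subgroup.card_mul_index (famStab b)
      have hpm : Nat.card (Equiv.Perm M) = m ! := by
        rw [Nat.card_eq_fintype_card, Fintype.card_perm, hM]
      calc (k+1) * F.card ≤ (famStab b).index * Nat.card (famStab b) :=
            Nat.mul_le_mul hidx (hc1.trans_eq hc2)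
        _ = m ! := by rw [mul_comm, hmul, hpm]
  -- final arithmetic
  have h3 : k * F.card + F.card ≤ S.card + F.card := by
    calc k * F.card + F.card = (k+1) * F.card := by ring
      _ ≤ m ! := hFle
      _ = S.card + F.card := hSF.symm
  have h4 : k * F.card ≤ S.card := Nat.le_of_add_le_add_right h3
  have hnat : k * m ! ≤ (k+1) * S.card := by
    calc k * m ! = k * (S.card + F.card) := by rw [hSF]
      _ = k * S.card + k * F.card := by ring
      _ ≤ k * S.card + S.card := Nat.add_le_add_left h4 _
      _ = (k+1) * S.card := by ring
  rw [hcnt]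
  have hm2' : (m:ℝ)/2 + 1 = (k:ℝ) + 1 := by rw [hm2]; push_cast; ring
  rw [hm2']
  have hkpos : (0:ℝ) < (k:ℝ) + 1 := by positivity
  have hfrac : (1:ℝ) - 1/((k:ℝ)+1) = (k:ℝ)/((k:ℝ)+1) := by field_simp; ring
  rw [hfrac, div_mul_eq_mul_div, div_le_iff₀ hkpos]
  have hnatR : (k:ℝ) * (m ! : ℝ) ≤ ((k:ℝ)+1) * (S.card : ℝ) := by
    exact_mod_cast hnat
  have hfacpos : (0:ℝ) ≤ (m ! : ℝ) := by positivity
  push_cast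
  nlinarith [hnatR, hfacpos]
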